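/- If a polynomial f : ℝ^n → ℝ is sos-convex, i.e., its Hessian factors as ∇²f(x) = F(x)ᵀF(x) for some matrix polynomial F, then f is first order sos convex: the polynomial in (x,u) given by f(x) - f(u) - ∇f(u)ᵀ(x-u) is a sum of squares of polynomials. -/

import Mathlib

open MvPolynomial

section Aux

open Polynomial

private lemma chain_rule' {n : ℕ} {R : Type*} [CommRing R] [Algebra ℝ R]
    (σ : Fin n → Polynomial R) (f : MvPolynomial (Fin n) ℝ) :
    Polynomial.derivative (MvPolynomial.aeval σ f)
      = ∑ i : Fin n, MvPolynomial.aeval σ (MvPolynomial.pderiv i f)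
          * Polynomial.derivative (σ i) := by
  induction f using MvPolynomial.induction_on with
  | C a => simp [MvPolynomial.aeval_C, Polynomial.algebraMap_apply]
  | add p q hp hq => simp [map_add, hp, hq, add_mul, Finset.sum_add_distrib]
  | mul_X p i hp =>
      simp only [map_mul, MvPolynomial.aeval_X, Polynomial.derivative_mul, hp,
        MvPolynomial.pderiv_mul, map_add, add_mul]
      rw [Finset.sum_mul, Finset.sum_add_distrib]
      refine congrArg₂ (· + ·) ?_ ?_
      · exact Finset.sum_congr rfl fun j _ => by ring
      · rw [Finset.sum_eq_single i]
        · simp [MvPolynomial.pderiv_X_self]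
        · intro j _ hj; simp [MvPolynomial.pderiv_X, Pi.single_apply, hj]
        · simp

private lemma moment_integral' (m : ℕ) :
    ∫ t in (0:ℝ)..1, (1 - t) * t ^ m = (((m:ℝ)+1)*((m:ℝ)+2))⁻¹ := by
  have h1 : IntervalIntegrable (fun t : ℝ => t ^ m) MeasureTheory.volume 0 1 :=
    (continuous_pow m).intervalIntegrable 0 1
  have h2 : IntervalIntegrable (fun t : ℝ => t ^ (m+1)) MeasureTheory.volume 0 1 :=
    (continuous_pow (m+1)).intervalIntegrable 0 1
  have : ∀ t : ℝ, (1 - t) * t ^ m = t ^ m - t ^ (m+1) := by intro t; ring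
  rw [intervalIntegral.integral_congr (g := fun t => t ^ m - t ^ (m+1)) (fun t _ => this t)]
  rw [intervalIntegral.integral_sub h1 h2, integral_pow, integral_pow]
  have hm1 : ((m:ℝ)+1) ≠ 0 := by positivity
  have hm2 : ((m:ℝ)+2) ≠ 0 := by positivity
  field_simp
  ring_nf
  push_cast
  ring

open Matrix in
private lemma moment_psd' (N : ℕ) :
    Matrix.PosSemidef (Matrix.of (fun a b : Fin N =>
      ((((a:ℕ):ℝ)+((b:ℕ):ℝ)+1)*(((a:ℕ):ℝ)+((b:ℕ):ℝ)+2))⁻¹)) := by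
  rw [Matrix.posSemidef_iff_dotProduct_mulVec]
  constructor
  · ext a b
    simp [Matrix.conjTranspose_apply]
    ring_nf
  · intro x
    have key : star x ⬝ᵥ ((Matrix.of (fun a b : Fin N =>
        ((((a:ℕ):ℝ)+((b:ℕ):ℝ)+1)*(((a:ℕ):ℝ)+((b:ℕ):ℝ)+2))⁻¹)) *ᵥ x)
        = ∫ t in (0:ℝ)..1, (1 - t) * (∑ a : Fin N, x a * t ^ (a:ℕ))^2 := by
      have expand : ∀ t : ℝ, (1 - t) * (∑ a : Fin N, x a * t ^ (a:ℕ))^2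
          = ∑ a : Fin N, ∑ b : Fin N, (x a * x b) * ((1 - t) * t ^ ((a:ℕ)+(b:ℕ))) := by
        intro t
        rw [sq, Finset.sum_mul_sum, Finset.mul_sum]
        refine Finset.sum_congr rfl fun a _ => ?_
        rw [Finset.mul_sum]
        refine Finset.sum_congr rfl fun b _ => ?_
        rw [pow_add]; ring
      rw [intervalIntegral.integral_congr (fun t _ => expand t)]
      rw [intervalIntegral.integral_finset_sum (fun a _ => ?_)]
      · rw [dotProduct]
        refine Finset.sum_congr rfl fun a _ => ?_
        rw [intervalIntegral.integral_finset_sum (fun b _ => ?_)]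
        · rw [Matrix.mulVec, dotProduct, Finset.mul_sum]
          refine Finset.sum_congr rfl fun b _ => ?_
          rw [intervalIntegral.integral_const_mul, moment_integral']
          simp [Matrix.of_apply]
          ring
        · exact (Continuous.intervalIntegrable (by continuity) 0 1)
      · refine (Continuous.intervalIntegrable ?_ 0 1)
        exact continuous_finset_sum _ (fun b _ => by continuity)
    rw [key]
    refine intervalIntegral.integral_nonneg (by norm_num) (fun u hu => ?_)
    have h1 : 0 ≤ 1 - u := by linarith [hu.2]
    positivity

open scoped MatrixOrder in
open Matrix in
private lemma gram_sos {R : Type*} [CommRing R] [Algebra ℝ R] {N : ℕ} (c : Fin N → R) :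
    IsSumSq (∑ a : Fin N, ∑ b : Fin N,
      (((((a:ℕ):ℝ)+((b:ℕ):ℝ)+1)*(((a:ℕ):ℝ)+((b:ℕ):ℝ)+2))⁻¹) • (c a * c b)) := by
  have hM := moment_psd' N
  set S := CFC.sqrt (Matrix.of (fun a b : Fin N =>
      ((((a:ℕ):ℝ)+((b:ℕ):ℝ)+1)*(((a:ℕ):ℝ)+((b:ℕ):ℝ)+2))⁻¹)) with hSdef
  have hS2 : S * S = Matrix.of (fun a b : Fin N =>
      ((((a:ℕ):ℝ)+((b:ℕ):ℝ)+1)*(((a:ℕ):ℝ)+((b:ℕ):ℝ)+2))⁻¹) := CFC.sqrt_mul_sqrt_self _ hM.nonneg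
  have hsym : ∀ a b, S a b = S b a := by
    intro a b
    have h0 : (0 : Matrix (Fin N) (Fin N) ℝ) ≤ S := CFC.sqrt_nonneg _
    have h := h0.posSemidef.1.apply a b
    simpa using h.symm
  have key : (∑ a : Fin N, ∑ b : Fin N,
      (((((a:ℕ):ℝ)+((b:ℕ):ℝ)+1)*(((a:ℕ):ℝ)+((b:ℕ):ℝ)+2))⁻¹) • (c a * c b))
      = ∑ m : Fin N, (∑ a : Fin N, S m a • c a) * (∑ a : Fin N, S m a • c a) := by
    have step : ∀ m : Fin N, (∑ a : Fin N, S m a • c a) * (∑ a : Fin N, S m a • c a)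
        = ∑ a : Fin N, ∑ b : Fin N, (S m a * S m b) • (c a * c b) := by
      intro m
      rw [Finset.sum_mul_sum]
      refine Finset.sum_congr rfl fun a _ => Finset.sum_congr rfl fun b _ => ?_
      rw [smul_mul_smul_comm]
    simp only [step]
    conv_rhs => rw [Finset.sum_comm]
    refine Finset.sum_congr rfl fun a _ => ?_
    conv_rhs => rw [Finset.sum_comm]
    refine Finset.sum_congr rfl fun b _ => ?_
    rw [← Finset.sum_smul]
    congr 1
    symm
    calc ∑ m : Fin N, S m a * S m b = ∑ m : Fin N, S a m * S m b := by
          exact Finset.sum_congr rfl fun m _ => by rw [hsym m a]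
      _ = (S * S) a b := (Matrix.mul_apply).symm
      _ = ((((a:ℕ):ℝ)+((b:ℕ):ℝ)+1)*(((a:ℕ):ℝ)+((b:ℕ):ℝ)+2))⁻¹ := by rw [hS2]; rfl
  rw [key]
  exact IsSumSq.sum_mul_self _ _

private lemma gram_sos' {R : Type*} [CommRing R] [Algebra ℝ R] (N : ℕ) (c : ℕ → R) :
    IsSumSq (∑ a ∈ Finset.range N, ∑ b ∈ Finset.range N,
      ((((a:ℝ)+(b:ℝ)+1)*((a:ℝ)+(b:ℝ)+2))⁻¹) • (c a * c b)) := by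
  have e : (∑ a ∈ Finset.range N, ∑ b ∈ Finset.range N,
        ((((a:ℝ)+(b:ℝ)+1)*((a:ℝ)+(b:ℝ)+2))⁻¹) • (c a * c b))
      = ∑ a : Fin N, ∑ b : Fin N,
          (((((a:ℕ):ℝ)+((b:ℕ):ℝ)+1)*(((a:ℕ):ℝ)+((b:ℕ):ℝ)+2))⁻¹) • (c a * c b) := by
    rw [← Fin.sum_univ_eq_sum_range]
    exact Finset.sum_congr rfl fun a _ => by rw [← Fin.sum_univ_eq_sum_range]
  rw [e]
  exact gram_sos _

private lemma smul_coeff_dd {R : Type*} [CommRing R] [Algebra ℝ R] (Q : Polynomial R) (d : ℕ) :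
    ((((d:ℝ)+1)*((d:ℝ)+2))⁻¹) • ((derivative (derivative Q)).coeff d) = Q.coeff (d+2) := by
  rw [Polynomial.coeff_derivative, Polynomial.coeff_derivative]
  have cast1 : ∀ m : ℕ, ((m:R)+1) = algebraMap ℝ R ((m:ℝ)+1) := by
    intro m; simp
  rw [cast1 (d+1), cast1 d]
  have : Q.coeff (d+1+1) * algebraMap ℝ R ((↑(d+1):ℝ)+1) * algebraMap ℝ R ((d:ℝ)+1)
      = ((((d:ℝ)+1)*((d:ℝ)+2))) • Q.coeff (d+2) := by
    rw [Algebra.smul_def, map_mul]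
    simp only [map_add, map_one, map_natCast, map_ofNat]
    push_cast
    ring
  rw [this, smul_smul, inv_mul_cancel₀ (by positivity), one_smul]

private lemma taylor_sum' {R : Type*} [CommRing R] [Algebra ℝ R] (Q : Polynomial R) (N : ℕ)
    (hdeg : Q.natDegree < N + 2) :
    Q.eval 1 - Q.coeff 0 - (derivative Q).coeff 0
      = ∑ d ∈ Finset.range N,
          ((((d:ℝ)+1)*((d:ℝ)+2))⁻¹) • ((derivative (derivative Q)).coeff d) := by
  have h1 : Q.eval 1 = ∑ i ∈ Finset.range (N+2), Q.coeff i := by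
    rw [Polynomial.eval_eq_sum_range' hdeg]
    simp
  have h2 : (derivative Q).coeff 0 = Q.coeff 1 := by
    rw [Polynomial.coeff_derivative]; simp
  rw [h1, h2, Finset.sum_range_succ' _ (N+1), Finset.sum_range_succ' _ N]
  simp only [smul_coeff_dd]
  ring

private lemma coeff_fold {R : Type*} [CommRing R] [Algebra ℝ R] {N : ℕ} (p : Polynomial R)
    (hdeg : p.natDegree < N) :
    ∑ d ∈ Finset.range (2*N),
        ((((d:ℝ)+1)*((d:ℝ)+2))⁻¹) • (p * p).coeff d
      = ∑ a ∈ Finset.range N, ∑ b ∈ Finset.range N,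
          ((((a:ℝ)+(b:ℝ)+1)*((a:ℝ)+(b:ℝ)+2))⁻¹) • (p.coeff a * p.coeff b) := by
  have hps : p = ∑ a ∈ Finset.range N, monomial a (p.coeff a) := as_sum_range' p N hdeg
  have hcoeff : ∀ d : ℕ, (p * p).coeff d
      = ∑ a ∈ Finset.range N, ∑ b ∈ Finset.range N,
          (if a + b = d then p.coeff a * p.coeff b else 0) := by
    intro d
    conv_lhs => rw [hps]
    rw [Finset.sum_mul_sum, finset_sum_coeff]
    refine Finset.sum_congr rfl fun a _ => ?_
    rw [finset_sum_coeff]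
    refine Finset.sum_congr rfl fun b _ => ?_
    rw [monomial_mul_monomial, Polynomial.coeff_monomial]
  simp only [hcoeff, Finset.smul_sum]
  rw [Finset.sum_comm]
  refine Finset.sum_congr rfl fun a ha => ?_
  rw [Finset.sum_comm]
  refine Finset.sum_congr rfl fun b hb => ?_
  simp only [smul_ite, smul_zero]
  rw [Finset.sum_ite_eq (Finset.range (2*N)) (a+b)
      (fun d => ((((d:ℝ)+1)*((d:ℝ)+2))⁻¹) • (p.coeff a * p.coeff b))]
  rw [if_pos]
  · push_cast; ring_nf
  · rw [Finset.mem_range] at *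
    omega

end Aux

/-- If a polynomial `f` in `n` variables is sos-convex, i.e. its Hessian factors as
`∇²f(x) = F(x)ᵀ F(x)` for a matrix polynomial `F`, then `f` is first order sos convex:
the polynomial `(x,u) ↦ f(x) - f(u) - ∇f(u)ᵀ(x-u)` is a sum of squares. -/
theorem sos_convex_implies_first_order_sos_convex
    (n k : ℕ) (f : MvPolynomial (Fin n) ℝ)
    (F : Matrix (Fin k) (Fin n) (MvPolynomial (Fin n) ℝ))
    (hHess : ∀ i j : Fin n,
      pderiv i (pderiv j f) = ∑ l : Fin k, F l i * F l j) :
    IsSumSq ((rename Sum.inl f - rename Sum.inr f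
      - ∑ i : Fin n, (rename Sum.inr (pderiv i f))
          * (X (Sum.inl i) - X (Sum.inr i)) :
        MvPolynomial (Fin n ⊕ Fin n) ℝ)) := by
  classical
  set cc : Fin n → MvPolynomial (Fin n ⊕ Fin n) ℝ :=
    fun i => X (Sum.inl i) - X (Sum.inr i) with hcc
  set σ : Fin n → Polynomial (MvPolynomial (Fin n ⊕ Fin n) ℝ) :=
    fun i => Polynomial.C (X (Sum.inr i)) + Polynomial.X * Polynomial.C (cc i) with hσ
  -- evaluation of an aeval along σ
  have heval : ∀ (c : MvPolynomial (Fin n ⊕ Fin n) ℝ) (g : MvPolynomial (Fin n) ℝ),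
      Polynomial.eval c (MvPolynomial.aeval σ g)
        = MvPolynomial.aeval (fun i => Polynomial.eval c (σ i)) g := by
    intro c g
    have h := MvPolynomial.comp_aeval_apply (f := σ)
      ((Polynomial.aeval c).restrictScalars ℝ) g
    simpa only [AlgHom.coe_restrictScalars', Polynomial.coe_aeval_eq_eval] using h
  have heval1 : ∀ g : MvPolynomial (Fin n) ℝ,
      Polynomial.eval 1 (MvPolynomial.aeval σ g) = rename Sum.inl g := by
    intro g
    rw [heval]
    have h : (fun i => Polynomial.eval (1 : MvPolynomial (Fin n ⊕ Fin n) ℝ) (σ i))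
        = fun i => X (Sum.inl i) := by
      funext i; simp [hσ, hcc]
    rw [h, rename_eq_aeval]
    rfl
  have heval0 : ∀ g : MvPolynomial (Fin n) ℝ,
      Polynomial.eval 0 (MvPolynomial.aeval σ g) = rename Sum.inr g := by
    intro g
    rw [heval]
    have h : (fun i => Polynomial.eval (0 : MvPolynomial (Fin n ⊕ Fin n) ℝ) (σ i))
        = fun i => X (Sum.inr i) := by
      funext i; simp [hσ, hcc]
    rw [h, rename_eq_aeval]
    rfl
  have hσ' : ∀ i, Polynomial.derivative (σ i) = Polynomial.C (cc i) := by
    intro i; simp [hσ]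
  set P := MvPolynomial.aeval σ f with hP
  have hd1 : Polynomial.derivative P
      = ∑ i : Fin n, MvPolynomial.aeval σ (pderiv i f) * Polynomial.C (cc i) := by
    rw [hP, chain_rule']
    simp only [hσ']
  set A : Fin k → Fin n → Polynomial (MvPolynomial (Fin n ⊕ Fin n) ℝ) :=
    fun l i => MvPolynomial.aeval σ (F l i) * Polynomial.C (cc i) with hA
  set q : Fin k → Polynomial (MvPolynomial (Fin n ⊕ Fin n) ℝ) :=
    fun l => ∑ i : Fin n, A l i with hq
  have hd2 : Polynomial.derivative (Polynomial.derivative P) = ∑ l : Fin k, q l * q l := by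
    rw [hd1, map_sum]
    have step1 : ∀ i : Fin n,
        Polynomial.derivative (MvPolynomial.aeval σ (pderiv i f) * Polynomial.C (cc i))
        = ∑ j : Fin n, ∑ l : Fin k, A l j * A l i := by
      intro i
      rw [Polynomial.derivative_mul, Polynomial.derivative_C, mul_zero, add_zero, chain_rule']
      rw [Finset.sum_mul]
      refine Finset.sum_congr rfl fun j _ => ?_
      rw [hσ', hHess j i, map_sum, Finset.sum_mul, Finset.sum_mul]
      refine Finset.sum_congr rfl fun l _ => ?_
      rw [map_mul, hA]
      ring
    simp only [step1, hq, Finset.sum_mul_sum]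
    calc ∑ i : Fin n, ∑ j : Fin n, ∑ l : Fin k, A l j * A l i
        = ∑ i : Fin n, ∑ l : Fin k, ∑ j : Fin n, A l j * A l i :=
          Finset.sum_congr rfl fun i _ => Finset.sum_comm
      _ = ∑ l : Fin k, ∑ i : Fin n, ∑ j : Fin n, A l j * A l i := Finset.sum_comm
      _ = ∑ l : Fin k, ∑ j : Fin n, ∑ i : Fin n, A l j * A l i :=
          Finset.sum_congr rfl fun l _ => Finset.sum_comm
  set N : ℕ := max (P.natDegree + 1) ((Finset.univ.sup fun l => (q l).natDegree) + 1) with hN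
  have hdegP : P.natDegree < N := by
    have := le_max_left (P.natDegree + 1) ((Finset.univ.sup fun l => (q l).natDegree) + 1)
    omega
  have hdegq : ∀ l : Fin k, (q l).natDegree < N := by
    intro l
    have h1 : (q l).natDegree ≤ Finset.univ.sup fun l => (q l).natDegree :=
      Finset.le_sup (f := fun l => (q l).natDegree) (Finset.mem_univ l)
    have h2 := le_max_right (P.natDegree + 1) ((Finset.univ.sup fun l => (q l).natDegree) + 1)
    omega
  have main := taylor_sum' P (2*N) (by omega)
  have hg : (rename Sum.inl f - rename Sum.inr f
      - ∑ i : Fin n, (rename Sum.inr (pderiv i f))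
          * (X (Sum.inl i) - X (Sum.inr i)) :
        MvPolynomial (Fin n ⊕ Fin n) ℝ)
      = Polynomial.eval 1 P - P.coeff 0 - (Polynomial.derivative P).coeff 0 := by
    rw [Polynomial.coeff_zero_eq_eval_zero, Polynomial.coeff_zero_eq_eval_zero,
      heval1, heval0, hd1]
    congr 1
    rw [Polynomial.eval_finset_sum]
    refine Finset.sum_congr rfl fun i _ => ?_
    rw [Polynomial.eval_mul, Polynomial.eval_C, heval0]
  rw [hg, main]
  simp only [hd2, Polynomial.finset_sum_coeff, Finset.smul_sum]
  rw [Finset.sum_comm]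
  have hfold : ∀ l : Fin k,
      ∑ d ∈ Finset.range (2*N), ((((d:ℝ)+1)*((d:ℝ)+2))⁻¹) • (q l * q l).coeff d
      = ∑ a ∈ Finset.range N, ∑ b ∈ Finset.range N,
          ((((a:ℝ)+(b:ℝ)+1)*((a:ℝ)+(b:ℝ)+2))⁻¹) • ((q l).coeff a * (q l).coeff b) :=
    fun l => coeff_fold (q l) (hdegq l)
  simp only [hfold]
  refine Finset.sum_induction _ IsSumSq (fun a b ha hb => ha.add hb) IsSumSq.zero (fun l _ => ?_)
  exact gram_sos' N (fun a => (q l).coeff a)
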